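/- Let G be a CADMG with districts D_1, …, D_k and let < be any topological ordering of V. Suppose p_{V|W}(x_V | x_W) = ∏_{i=1}^k r_i(x_{D_i} | x_{pa_G(D_i)\D_i}), where each r_i is a kernel for D_i given pa_G(D_i) \ D_i that recursively factorizes according to G[D_i]. Then for each i and all x, r_i(x_{D_i} | x_{pa_G(D_i)\D_i}) = ∏_{v ∈ D_i} p_{v|pre_<(v),W}(x_v | x_{pre_<(v)}, x_W), where each factor p_{v|pre_<(v),W} is a suitably chosen p_{V|W}-version of the conditional distribution of X_v given X_{pre_<(v)} and X_W (the g-formula). -/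

import Mathlib

open Classical

noncomputable section

/-- A conditional acyclic directed mixed graph (CADMG): disjoint sets of random
vertices `V` and fixed vertices `W`, directed edges into `V` with no loops or
directed cycles, symmetric bidirected edges between distinct random vertices,
and every fixed vertex has at least one child. -/
structure CADMG (α : Type) where
  V : Set α
  W : Set α
  dir : Set (α × α)
  bi : Set (α × α)
  disjointVW : Disjoint V W
  dir_mem : ∀ e ∈ dir, e.1 ∈ V ∪ W ∧ e.2 ∈ V
  dir_irrefl : ∀ e ∈ dir, e.1 ≠ e.2
  acyclic : ∀ a b : α, Relation.ReflTransGen (fun x y => (x, y) ∈ dir) a b →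
      Relation.ReflTransGen (fun x y => (x, y) ∈ dir) b a → a = b
  bi_symm : ∀ a b : α, (a, b) ∈ bi → (b, a) ∈ bi
  bi_mem : ∀ e ∈ bi, e.1 ∈ V ∧ e.2 ∈ V
  bi_irrefl : ∀ e ∈ bi, e.1 ≠ e.2
  fixed_child : ∀ w ∈ W, ∃ v, (w, v) ∈ dir

namespace CADMG

variable {α : Type}

/-- The parents of a vertex. -/
def pa (G : CADMG α) (b : α) : Set α := {a | (a, b) ∈ G.dir}

/-- The parents of a set of vertices. -/
def paSet (G : CADMG α) (A : Set α) : Set α := {a | ∃ b ∈ A, (a, b) ∈ G.dir}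

/-- The ancestors of a set of vertices (every vertex is its own ancestor). -/
def anc (G : CADMG α) (A : Set α) : Set α :=
  {w | ∃ v ∈ A, Relation.ReflTransGen (fun x y => (x, y) ∈ G.dir) w v}

/-- An ancestral set contains all of its own ancestors. -/
def Ancestral (G : CADMG α) (A : Set α) : Prop := G.anc A = A

/-- A random-ancestral set: a set of random vertices all of whose ancestors are
in the set itself or fixed. -/
def RandomAncestral (G : CADMG α) (A : Set α) : Prop :=
  A ⊆ G.V ∧ G.anc A ⊆ A ∪ G.W

/-- The sterile subset of `C`: those members of `C` that are not parents of `C`. -/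
def sterile (G : CADMG α) (C : Set α) : Set α := C \ G.paSet C

/-- A bidirected-connected set of random vertices: every two members are joined by
a path of bidirected edges with all intermediate vertices inside the set. -/
def BiConn (G : CADMG α) (B : Set α) : Prop :=
  B ⊆ G.V ∧ ∀ a ∈ B, ∀ b ∈ B,
    Relation.ReflTransGen (fun x y => (x, y) ∈ G.bi ∧ x ∈ B ∧ y ∈ B) a b

/-- A district: a maximal bidirected-connected set of random vertices. -/
def IsDistrict (G : CADMG α) (D : Set α) : Prop :=
  D.Nonempty ∧ G.BiConn D ∧ ∀ D', G.BiConn D' → D ⊆ D' → D' = D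

/-- `dis G B`: the union of the districts of `G` meeting `B`. -/
def dis (G : CADMG α) (B : Set α) : Set α :=
  ⋃₀ {D | G.IsDistrict D ∧ (D ∩ B).Nonempty}

/-- The induced graph `G[C]`: random vertices `C`, fixed vertices `pa_G(C) \ C`,
the bidirected edges of `G` within `C` and the directed edges of `G` pointing
into `C`. -/
def induce (G : CADMG α) (C : Set α) : CADMG α where
  V := C ∩ G.V
  W := G.paSet (C ∩ G.V) \ (C ∩ G.V)
  dir := {e | e ∈ G.dir ∧ e.2 ∈ C ∩ G.V}
  bi := {e | e ∈ G.bi ∧ e.1 ∈ C ∩ G.V ∧ e.2 ∈ C ∩ G.V}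
  disjointVW := by
    rw [Set.disjoint_left]; rintro a ha ⟨-, h⟩; exact h ha
  dir_mem := by
    rintro e ⟨he, h2⟩
    refine ⟨?_, h2⟩
    by_cases h1 : e.1 ∈ C ∩ G.V
    · exact Or.inl h1
    · exact Or.inr ⟨⟨e.2, h2, he⟩, h1⟩
  dir_irrefl := fun e he => G.dir_irrefl e he.1
  acyclic := fun a b h1 h2 =>
    G.acyclic a b (Relation.ReflTransGen.mono (by exact fun x y h => h.1) a b h1)
      (Relation.ReflTransGen.mono (by exact fun x y h => h.1) b a h2)
  bi_symm := fun a b h => ⟨G.bi_symm a b h.1, h.2.2, h.2.1⟩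
  bi_mem := fun e he => ⟨he.2.1, he.2.2⟩
  bi_irrefl := fun e he => G.bi_irrefl e he.1
  fixed_child := by
    rintro w ⟨⟨b, hb, hwb⟩, -⟩
    exact ⟨b, hwb, hb⟩

/-- A CADMG `G'` is reachable from `G` if it is obtained by iteratively
restricting to a district (`𝔡`) or to a random-ancestral set (`𝔪`). -/
inductive Reach : CADMG α → CADMG α → Prop where
  | refl (G : CADMG α) : Reach G G
  | district {G₁ G₂ : CADMG α} {D : Set α} :
      Reach G₁ G₂ → G₂.IsDistrict D → Reach G₁ (G₂.induce D)
  | margin {G₁ G₂ : CADMG α} {A : Set α} :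
      Reach G₁ G₂ → G₂.RandomAncestral A → Reach G₁ (G₂.induce A)

/-- `G₁` is a subgraph of `G₂`. -/
def Subgraph (G₁ G₂ : CADMG α) : Prop :=
  G₁.V ⊆ G₂.V ∧ G₁.W ⊆ G₂.W ∧ G₁.dir ⊆ G₂.dir ∧ G₁.bi ⊆ G₂.bi

/-- An intrinsic set: a nonempty bidirected-connected set `S` of random vertices
such that `G[S]` is reachable from `G`. -/
def Intrinsic (G : CADMG α) (S : Set α) : Prop :=
  S.Nonempty ∧ G.BiConn S ∧ Reach G (G.induce S)

/-- The recursive heads of `G`: sterile subsets of intrinsic sets. -/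
def heads (G : CADMG α) : Set (Set α) :=
  {H | ∃ S, G.Intrinsic S ∧ G.sterile S = H}

/-- The (unique) intrinsic set whose recursive head is `H`. -/
def intrinsicOf (G : CADMG α) (H : Set α) : Set α :=
  ⋃₀ {S | G.Intrinsic S ∧ G.sterile S = H}

/-- The partial order on recursive heads: `H₁ ≺ H₂` iff the intrinsic set of
`H₁` is strictly contained in that of `H₂`. -/
def headLT (G : CADMG α) (H₁ H₂ : Set α) : Prop :=
  G.intrinsicOf H₁ ⊂ G.intrinsicOf H₂

/-- The tail of a recursive head: the parents of its intrinsic set. -/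
def tail (G : CADMG α) (H : Set α) : Set α := G.paSet (G.intrinsicOf H)

/-- One step of the intrinsic-closure iteration: restrict to the ancestors of
`B`, then to the districts meeting `B`. -/
def closureStep (B : Set α) (G : CADMG α) : CADMG α :=
  (G.induce (G.anc B)).induce ((G.induce (G.anc B)).dis B)

/-- The intrinsic closure `I_G(B)`: the random vertex set of the stable graph
obtained by repeatedly alternating restriction to the ancestors of `B` and to
the districts meeting `B`.  (After `Fintype.card α` rounds the iteration has
stabilised.) -/
def intrinsicClosure [Fintype α] (G : CADMG α) (B : Set α) : Set α :=
  ((closureStep B)^[Fintype.card α] G).V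

/-- `Φ_G(C)`: the `≺`-maximal recursive heads of `G` contained in `C`. -/
def Phi (G : CADMG α) (C : Set α) : Set (Set α) :=
  {H | H ∈ G.heads ∧ H ⊆ C ∧ ∀ H' ∈ G.heads, H' ⊆ C → H' ≠ H → ¬ G.headLT H H'}

/-- `ψ_G(C) = C \ ⋃ Φ_G(C)`. -/
def psi (G : CADMG α) (C : Set α) : Set α := C \ ⋃₀ G.Phi C

/-- The recursive-head partition `⟨C⟩_G`, defined by `⟨∅⟩ = ∅` and
`⟨C⟩ = Φ(C) ∪ ⟨ψ(C)⟩`.  (The guard on cardinalities is automatically satisfied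
whenever the recursion is used, since `ψ_G(C) ⊊ C` for nonempty `C`.) -/
def partn (G : CADMG α) (C : Set α) : Set (Set α) :=
  if C = ∅ then ∅
  else if h : (G.psi C).ncard < C.ncard then G.Phi C ∪ G.partn (G.psi C)
  else G.Phi C
termination_by C.ncard
decreasing_by exact h

/-- A kernel `p_{V|W}`, written as a function of a full assignment of binary
values to all vertices: it takes values in `[0,1]`, depends only on the
coordinates in `V ∪ W`, and for every assignment to `W` (and the remaining
coordinates) the values summed over assignments to `V` equal `1`. -/
def IsKernel [Fintype α] (V W : Set α) (p : (α → Bool) → ℝ) : Prop :=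
  (∀ x, 0 ≤ p x ∧ p x ≤ 1) ∧
  (∀ x y : α → Bool, (∀ v ∈ V ∪ W, x v = y v) → p x = p y) ∧
  (∀ x : α → Bool, ∑ g : α → Bool,
      (if ∀ v, v ∉ V → g v = x v then p g else 0) = 1)

/-- Sum a function of assignments over all values of the coordinates in `D`
(the marginal summing out the variables in `D`). -/
def marginOut [Fintype α] (D : Set α) (p : (α → Bool) → ℝ) (x : α → Bool) : ℝ :=
  ∑ g : α → Bool, if ∀ v, v ∉ D → g v = x v then p g else 0

/-- `q` is a version of the conditional kernel of `A` given `B` and `W`, derived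
from the kernel `p = p_{V|W}`. -/
def IsCondVersion [Fintype α] (V W A B : Set α)
    (p q : (α → Bool) → ℝ) : Prop :=
  IsKernel A (B ∪ W) q ∧
  ∀ x : α → Bool, q x * marginOut (V \ B) p x = marginOut (V \ (A ∪ B)) p x

/-- Recursive factorization of a kernel `p` according to a CADMG `G`
(the nested Markov property): either `|V| = 1`, or (i) `p` factorizes into
kernels indexed by the districts of `G`, each of which (when there are at least
two districts) recursively factorizes according to the induced graph, and
(ii) for every ancestral set `A` with `V \ A ≠ ∅` the margin over `A` does not
depend on the fixed coordinates outside `A` and recursively factorizes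
according to `G[V ∩ A]`. -/
inductive RF [Fintype α] : CADMG α → ((α → Bool) → ℝ) → Prop where
  | base (G : CADMG α) (p : (α → Bool) → ℝ) (h : G.V.ncard = 1) : RF G p
  | factor (G : CADMG α) (p : (α → Bool) → ℝ)
      (Ds : Finset (Set α)) (r : Set α → (α → Bool) → ℝ)
      (hDs : ∀ D, G.IsDistrict D ↔ D ∈ Ds)
      (hker : ∀ D ∈ Ds, IsKernel D (G.paSet D \ D) (r D))
      (hfact : ∀ x, p x = ∏ D ∈ Ds, r D x)
      (hrec : 2 ≤ Ds.card → ∀ D ∈ Ds, RF (G.induce D) (r D))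
      (hmarg_nodep : ∀ A : Set α, G.Ancestral A → (G.V \ A).Nonempty →
        ∀ x y : α → Bool, (∀ v ∈ (G.V ∩ A) ∪ (G.W ∩ A), x v = y v) →
          marginOut (G.V \ A) p x = marginOut (G.V \ A) p y)
      (hmarg_rf : ∀ A : Set α, G.Ancestral A → (G.V \ A).Nonempty →
        RF (G.induce (G.V ∩ A)) (marginOut (G.V \ A) p)) :
      RF G p

/-- The alternating sum `Σ_{O ⊆ C ⊆ U} (−1)^{|C\O|} ∏_{H ∈ ⟨C⟩_G} q_H(x_T)`. -/
def altSum (G : CADMG α) (q : Set α → (α → Bool) → ℝ) (x : α → Bool)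
    (O U : Set α) : ℝ :=
  ∑ᶠ C ∈ {C : Set α | O ⊆ C ∧ C ⊆ U},
    (-1 : ℝ) ^ (C \ O).ncard * ∏ᶠ H ∈ G.partn C, q H x

/-- A kernel `p` is parameterized according to `G`: there are parameters
`q_H(x_T)` (one real number for each recursive head `H` and each value `x_T` of
its tail `T`) with
`p(x_V | x_W) = Σ_{O ⊆ C ⊆ V} (−1)^{|C\O|} ∏_{H ∈ ⟨C⟩_G} q_H(x_T)`,
where `O = {v ∈ V : x_v = 0}`. -/
def Parameterized [Fintype α] (G : CADMG α) (p : (α → Bool) → ℝ) : Prop :=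
  ∃ q : Set α → (α → Bool) → ℝ,
    (∀ H ∈ G.heads, ∀ x y : α → Bool,
        (∀ v ∈ G.tail H, x v = y v) → q H x = q H y) ∧
    ∀ x : α → Bool,
      p x = G.altSum q x {v | v ∈ G.V ∧ x v = false} G.V

end CADMG

section GFormulaAux

open CADMG

variable {α : Type} [Fintype α]

lemma marginOut_empty (p : (α → Bool) → ℝ) (x : α → Bool) :
    marginOut (∅ : Set α) p x = p x := by
  classical
  unfold marginOut
  rw [Finset.sum_eq_single x]
  · rw [if_pos]; intro v hv; rfl
  · intro g _ hg
    rw [if_neg]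
    intro h
    exact hg (funext fun u => h u (Set.notMem_empty u))
  · intro h; exact absurd (Finset.mem_univ x) h

lemma marginOut_nonneg {p : (α → Bool) → ℝ} (hp : ∀ g, 0 ≤ p g) (S : Set α)
    (x : α → Bool) : 0 ≤ marginOut S p x := by
  unfold marginOut
  refine Finset.sum_nonneg fun g _ => ?_
  split
  · exact hp g
  · exact le_refl 0

lemma marginOut_mono {p : (α → Bool) → ℝ} (hp : ∀ g, 0 ≤ p g) {S T : Set α}
    (hST : S ⊆ T) (x : α → Bool) : marginOut S p x ≤ marginOut T p x := by
  unfold marginOut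
  refine Finset.sum_le_sum fun g _ => ?_
  by_cases h : ∀ v, v ∉ S → g v = x v
  · rw [if_pos h, if_pos fun v hv => h v (fun hvS => hv (hST hvS))]
  · rw [if_neg h]
    split
    · exact hp g
    · exact le_refl 0

lemma marginOut_insert [DecidableEq α] {p : (α → Bool) → ℝ} {S : Set α} {v : α} (hv : v ∉ S)
    (x : α → Bool) :
    marginOut (insert v S) p x =
      marginOut S p (Function.update x v true) +
        marginOut S p (Function.update x v false) := by
  classical
  unfold marginOut
  rw [← Finset.sum_add_distrib]
  refine Finset.sum_congr rfl fun g _ => ?_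
  have key : ∀ b : Bool, (∀ u, u ∉ S → g u = Function.update x v b u) ↔
      (g v = b ∧ ∀ u, u ∉ insert v S → g u = x u) := by
    intro b
    constructor
    · intro h
      refine ⟨by simpa using h v hv, fun u hu => ?_⟩
      have h1 : u ∉ S := fun hh => hu (Set.mem_insert_of_mem v hh)
      have h2 : u ≠ v := fun hh => hu (hh ▸ Set.mem_insert u S)
      have := h u h1
      rwa [Function.update_of_ne h2] at this
    · rintro ⟨h1, h2⟩ u hu
      by_cases huv : u = v
      · subst huv; rw [Function.update_self]; exact h1
      · rw [Function.update_of_ne huv]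
        exact h2 u (fun hh => (Set.mem_insert_iff.mp hh).elim huv hu)
  by_cases hins : ∀ u, u ∉ insert v S → g u = x u
  · rw [if_pos hins]
    cases hgv : g v
    · rw [if_neg, if_pos ((key false).mpr ⟨hgv, hins⟩), zero_add]
      intro h
      have := ((key true).mp h).1
      rw [hgv] at this; simp at this
    · rw [if_pos ((key true).mpr ⟨hgv, hins⟩), if_neg, add_zero]
      intro h
      have := ((key false).mp h).1
      rw [hgv] at this; simp at this
  · rw [if_neg hins, if_neg, if_neg, add_zero]
    · intro h; exact hins ((key false).mp h).2
    · intro h; exact hins ((key true).mp h).2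

/-- If `p` depends only on coordinates in `E`, then `marginOut S p` depends
only on coordinates in `E \ S`. -/
lemma marginOut_depend {p : (α → Bool) → ℝ} {E : Set α}
    (hp : ∀ x y : α → Bool, (∀ u ∈ E, x u = y u) → p x = p y) (S : Set α)
    {x y : α → Bool} (hxy : ∀ u ∈ E, u ∉ S → x u = y u) :
    marginOut S p x = marginOut S p y := by
  classical
  unfold marginOut
  set τ : (α → Bool) → (α → Bool) :=
    fun g u => if u ∈ S then g u else (if x u = y u then g u else !(g u)) with hτ
  have hinv : Function.Involutive τ := by
    intro g; funext u
    by_cases h1 : u ∈ S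
    · simp [hτ, h1]
    · by_cases h2 : x u = y u
      · simp [hτ, h1, h2]
      · simp [hτ, h1, h2]
  refine Fintype.sum_bijective τ hinv.bijective _ _ fun g => ?_
  have hcond : (∀ u, u ∉ S → g u = x u) ↔ (∀ u, u ∉ S → τ g u = y u) := by
    constructor
    · intro h u hu
      by_cases h2 : x u = y u
      · simp only [hτ, if_neg hu, if_pos h2]; rw [h u hu, h2]
      · simp only [hτ, if_neg hu, if_neg h2]
        rw [h u hu]
        cases hx : x u <;> cases hy : y u <;> simp_all
    · intro h u hu
      have := h u hu
      by_cases h2 : x u = y u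
      · simp only [hτ, if_neg hu, if_pos h2] at this
        cases hx : x u <;> cases hy : y u <;> simp_all
      · simp only [hτ, if_neg hu, if_neg h2] at this
        cases hg : g u <;> cases hx : x u <;> cases hy : y u <;> simp_all
  by_cases h : ∀ u, u ∉ S → g u = x u
  · rw [if_pos h, if_pos (hcond.mp h)]
    refine hp g (τ g) fun u hu => ?_
    by_cases h1 : u ∈ S
    · simp [hτ, h1]
    · simp [hτ, h1, hxy u hu h1]
  · rw [if_neg h, if_neg (fun hh => h (hcond.mpr hh))]


lemma biConn_singleton (G : CADMG α) {v : α} (hv : v ∈ G.V) : G.BiConn {v} := by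
  refine ⟨Set.singleton_subset_iff.mpr hv, ?_⟩
  intro a ha b hb
  rw [Set.mem_singleton_iff] at ha hb
  subst ha; subst hb
  exact Relation.ReflTransGen.refl

lemma biConn_union (G : CADMG α) {B₁ B₂ : Set α} (h1 : G.BiConn B₁)
    (h2 : G.BiConn B₂) {v : α} (hv1 : v ∈ B₁) (hv2 : v ∈ B₂) :
    G.BiConn (B₁ ∪ B₂) := by
  have lift : ∀ (B : Set α), B ⊆ B₁ ∪ B₂ → ∀ a b,
      Relation.ReflTransGen (fun x y => (x, y) ∈ G.bi ∧ x ∈ B ∧ y ∈ B) a b →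
      Relation.ReflTransGen
        (fun x y => (x, y) ∈ G.bi ∧ x ∈ B₁ ∪ B₂ ∧ y ∈ B₁ ∪ B₂) a b :=
    fun B hB a b h => Relation.ReflTransGen.mono
      (by exact fun x y hxy => ⟨hxy.1, hB hxy.2.1, hB hxy.2.2⟩) a b h
  refine ⟨Set.union_subset h1.1 h2.1, ?_⟩
  rintro a (ha | ha) b (hb | hb)
  · exact lift B₁ Set.subset_union_left a b (h1.2 a ha b hb)
  · exact (lift B₁ Set.subset_union_left a v (h1.2 a ha v hv1)).trans
      (lift B₂ Set.subset_union_right v b (h2.2 v hv2 b hb))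
  · exact (lift B₂ Set.subset_union_right a v (h2.2 a ha v hv2)).trans
      (lift B₁ Set.subset_union_left v b (h1.2 v hv1 b hb))
  · exact lift B₂ Set.subset_union_right a b (h2.2 a ha b hb)

lemma exists_district (G : CADMG α) {v : α} (hv : v ∈ G.V) :
    ∃ D, G.IsDistrict D ∧ v ∈ D := by
  classical
  set T : Finset (Finset α) :=
    Finset.univ.filter (fun F => G.BiConn ↑F ∧ v ∈ F) with hT
  have hne : T.Nonempty := by
    refine ⟨{v}, ?_⟩
    rw [hT, Finset.mem_filter]
    refine ⟨Finset.mem_univ _, ?_, Finset.mem_singleton_self v⟩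
    simpa using biConn_singleton G hv
  obtain ⟨F, hF, hmax⟩ := Finset.exists_max_image T Finset.card hne
  rw [hT, Finset.mem_filter] at hF
  refine ⟨↑F, ⟨⟨v, Finset.mem_coe.mpr hF.2.2⟩, hF.2.1, ?_⟩, Finset.mem_coe.mpr hF.2.2⟩
  intro D' hD' hsub
  have hfin : D'.Finite := Set.toFinite D'
  have hmemT : hfin.toFinset ∈ T := by
    rw [hT, Finset.mem_filter]
    refine ⟨Finset.mem_univ _, ?_, ?_⟩
    · rwa [Set.Finite.coe_toFinset]
    · rw [Set.Finite.mem_toFinset]; exact hsub (Finset.mem_coe.mpr hF.2.2)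
  have hsubF : F ⊆ hfin.toFinset := fun a ha => by
    rw [Set.Finite.mem_toFinset]; exact hsub (Finset.mem_coe.mpr ha)
  have heq := Finset.eq_of_subset_of_card_le hsubF (hmax _ hmemT)
  calc D' = ↑hfin.toFinset := (Set.Finite.coe_toFinset hfin).symm
    _ = ↑F := by rw [← heq]

lemma district_unique (G : CADMG α) {D₁ D₂ : Set α} (h1 : G.IsDistrict D₁)
    (h2 : G.IsDistrict D₂) {v : α} (hv1 : v ∈ D₁) (hv2 : v ∈ D₂) : D₁ = D₂ := by
  have hu := biConn_union G h1.2.1 h2.2.1 hv1 hv2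
  have e1 := h1.2.2 _ hu Set.subset_union_left
  have e2 := h2.2.2 _ hu Set.subset_union_right
  exact e1.symm.trans e2

variable [LinearOrder α]

/-- The chosen version of the conditional kernel of `v` given its predecessors,
expressed via margins of the district kernel `r` of the district `D` of `v`. -/
def condK (D : Set α) (r : (α → Bool) → ℝ) (v : α) (x : α → Bool) : ℝ :=
  if marginOut {u | u ∈ D ∧ v ≤ u} r x = 0 then 1 / 2
  else marginOut {u | u ∈ D ∧ v < u} r x / marginOut {u | u ∈ D ∧ v ≤ u} r x

lemma telescope (D : Set α) (r : (α → Bool) → ℝ) (hnn : ∀ g, 0 ≤ r g)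
    (hone : ∀ x, marginOut D r x = 1) :
    ∀ (n : ℕ) (E : Finset α), E.card ≤ n → ↑E ⊆ D →
      (∀ u ∈ D, ∀ e ∈ E, u < e → u ∈ E) → ∀ x,
      ∏ w ∈ E, condK D r w x = marginOut (D \ ↑E) r x := by
  intro n
  induction n with
  | zero =>
    intro E hcard _ _ x
    obtain rfl : E = ∅ := Finset.card_eq_zero.mp (Nat.le_zero.mp hcard)
    simp only [Finset.prod_empty, Finset.coe_empty, Set.diff_empty]
    exact (hone x).symm
  | succ n ih =>
    intro E hcard hE hdown x
    rcases Finset.eq_empty_or_nonempty E with rfl | hne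
    · simp only [Finset.prod_empty, Finset.coe_empty, Set.diff_empty]
      exact (hone x).symm
    · set v := E.max' hne with hv
      have hvE : v ∈ E := E.max'_mem hne
      set E' := E.erase v with hE'
      have hprod : ∏ w ∈ E, condK D r w x =
          condK D r v x * ∏ w ∈ E', condK D r w x :=
        (Finset.mul_prod_erase E _ hvE).symm
      have hE'sub : ↑E' ⊆ D := fun a ha =>
        hE (Finset.mem_coe.mpr (Finset.mem_of_mem_erase (Finset.mem_coe.mp ha)))
      have hdown' : ∀ u ∈ D, ∀ e ∈ E', u < e → u ∈ E' := by
        intro u hu e he hlt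
        have heE := Finset.mem_of_mem_erase he
        refine Finset.mem_erase.mpr ⟨?_, hdown u hu e heE hlt⟩
        exact ne_of_lt (lt_of_lt_of_le hlt (E.le_max' e heE))
      have hcard' : E'.card ≤ n := by
        have h1 : E'.card = E.card - 1 := by
          rw [hE']; exact Finset.card_erase_of_mem hvE
        have h2 : 0 < E.card := Finset.card_pos.mpr hne
        omega
      have hih := ih E' hcard' hE'sub hdown' x
      have hden : {u | u ∈ D ∧ v ≤ u} = D \ ↑E' := by
        ext u
        simp only [Set.mem_setOf_eq, Set.mem_diff, Finset.mem_coe, hE',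
          Finset.mem_erase]
        constructor
        · rintro ⟨hu, hle⟩
          refine ⟨hu, fun h => ?_⟩
          have h1 : u ≤ v := E.le_max' u h.2
          have h2 : u < v := lt_of_le_of_ne h1 h.1
          exact absurd hle (not_le.mpr h2)
        · rintro ⟨hu, h⟩
          refine ⟨hu, ?_⟩
          by_contra hle
          push_neg at hle
          exact h ⟨ne_of_lt hle, hdown u hu v hvE hle⟩
      have hnum : {u | u ∈ D ∧ v < u} = D \ ↑E := by
        ext u
        simp only [Set.mem_setOf_eq, Set.mem_diff, Finset.mem_coe]
        constructor
        · rintro ⟨hu, hlt⟩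
          exact ⟨hu, fun h => absurd (E.le_max' u h) (not_le.mpr hlt)⟩
        · rintro ⟨hu, h⟩
          refine ⟨hu, ?_⟩
          by_contra hle
          push_neg at hle
          rcases lt_or_eq_of_le hle with h1 | h1
          · exact h (hdown u hu v hvE h1)
          · exact h (h1 ▸ hvE)
      rw [hprod, hih, ← hden]
      unfold condK
      by_cases h0 : marginOut {u | u ∈ D ∧ v ≤ u} r x = 0
      · rw [if_pos h0, h0, mul_zero]
        have hmono : marginOut (D \ ↑E) r x ≤
            marginOut {u | u ∈ D ∧ v ≤ u} r x := by
          rw [hden]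
          refine marginOut_mono hnn (Set.diff_subset_diff_right ?_) x
          exact fun a ha => Finset.mem_coe.mpr
            (Finset.mem_of_mem_erase (Finset.mem_coe.mp ha))
        have h1 : marginOut (D \ ↑E) r x = 0 :=
          le_antisymm (h0 ▸ hmono) (marginOut_nonneg hnn _ x)
        rw [h1]
      · rw [if_neg h0, hnum, div_mul_cancel₀ _ h0]

lemma margin_nodep (G : CADMG α) (htop : ∀ e ∈ G.dir, e.1 ∈ G.V → e.1 < e.2)
    {D : Set α} (hDsub : D ⊆ G.V) (r : (α → Bool) → ℝ)
    (hker : IsKernel D (G.paSet D \ D) r) (hrf : RF (G.induce D) r)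
    {B : Set α} (hB1 : B ⊆ G.V) (hB2 : ∀ u ∈ B, ∀ w ∈ G.V, w < u → w ∈ B)
    {x y : α → Bool} (hxy : ∀ u ∈ (D ∩ B) ∪ G.paSet (D ∩ B), x u = y u) :
    marginOut (D \ B) r x = marginOut (D \ B) r y := by
  classical
  by_cases hDB : D \ B = ∅
  · have hDsubB : D ⊆ B := Set.diff_eq_empty.mp hDB
    rw [hDB, marginOut_empty, marginOut_empty]
    refine hker.2.1 x y fun u hu => ?_
    rcases hu with hu | hu
    · exact hxy u (Or.inl ⟨hu, hDsubB hu⟩)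
    · obtain ⟨⟨b, hb, hub⟩, hnD⟩ := hu
      exact hxy u (Or.inr ⟨b, ⟨hb, hDsubB hb⟩, hub⟩)
  · have hGV : (G.induce D).V = D := by
      show D ∩ G.V = D
      exact Set.inter_eq_self_of_subset_left hDsub
    cases hrf with
    | base _ _ h =>
      rw [hGV] at h
      obtain ⟨d, rfl⟩ := Set.ncard_eq_one.mp h
      obtain ⟨u, hu⟩ := Set.nonempty_iff_ne_empty.mpr hDB
      have hdB : d ∉ B := by
        have : u = d := hu.1
        subst this
        exact hu.2
      have hset : ({d} : Set α) \ B = {d} := by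
        ext u
        simp only [Set.mem_diff, Set.mem_singleton_iff]
        exact ⟨fun h => h.1, fun h => ⟨h, h ▸ hdB⟩⟩
      have h1 : ∀ z : α → Bool, marginOut ({d} : Set α) r z = 1 :=
        fun z => hker.2.2 z
      rw [hset, h1 x, h1 y]
    | factor _ _ Ds' r' hDs' hker' hfact' hrec' hnodep' hrf' =>
      set A : Set α := (D ∩ B) ∪ (G.paSet (D ∩ B) \ D) with hA
      have hVA : (G.induce D).V \ A = D \ B := by
        rw [hGV]
        ext u
        simp only [hA, Set.mem_diff, Set.mem_union, Set.mem_inter_iff]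
        tauto
      have hanc : (G.induce D).Ancestral A := by
        show (G.induce D).anc A = A
        apply subset_antisymm
        · intro w hw
          have hw' : ∃ d ∈ A, Relation.ReflTransGen
              (fun a b => (a, b) ∈ (G.induce D).dir) w d := hw
          obtain ⟨d, hd, hpath⟩ := hw'
          refine Relation.ReflTransGen.head_induction_on hpath hd ?_
          intro a c hac hcd hcA
          have hac' : (a, c) ∈ G.dir ∧ (c ∈ D ∧ c ∈ G.V) := hac
          obtain ⟨hdir, hcD, hcV⟩ := hac'
          have hcDB : c ∈ D ∩ B := by
            rcases hcA with h | h
            · exact h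
            · exact absurd hcD h.2
          by_cases haD : a ∈ D
          · have haV : a ∈ G.V := hDsub haD
            have hlt := htop (a, c) hdir haV
            exact Or.inl ⟨haD, hB2 c hcDB.2 a haV hlt⟩
          · exact Or.inr ⟨⟨c, hcDB, hdir⟩, haD⟩
        · intro w hw
          exact ⟨w, hw, Relation.ReflTransGen.refl⟩
      have hne : ((G.induce D).V \ A).Nonempty := by
        rw [hVA]
        exact Set.nonempty_iff_ne_empty.mpr hDB
      have key := hnodep' A hanc hne x y ?_
      · rw [hVA] at key
        exact key
      · intro u hu
        rcases hu with ⟨huV, huA⟩ | ⟨huW, huA⟩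
        · rcases huA with h | h
          · exact hxy u (Or.inl h)
          · rw [hGV] at huV
            exact absurd huV h.2
        · rcases huA with h | h
          · exact hxy u (Or.inl h)
          · exact hxy u (Or.inr h.1)

lemma gfactorization (G : CADMG α) (htop : ∀ e ∈ G.dir, e.1 ∈ G.V → e.1 < e.2)
    (p : (α → Bool) → ℝ) (Ds : Finset (Set α))
    (hDs : ∀ D, G.IsDistrict D ↔ D ∈ Ds) (r : Set α → (α → Bool) → ℝ)
    (hker : ∀ D ∈ Ds, IsKernel D (G.paSet D \ D) (r D))
    (hrf : ∀ D ∈ Ds, RF (G.induce D) (r D))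
    (hfact : ∀ x, p x = ∏ D ∈ Ds, r D x) :
    ∀ (n : ℕ) (B : Set α), (G.V \ B).ncard ≤ n → B ⊆ G.V →
      (∀ u ∈ B, ∀ w ∈ G.V, w < u → w ∈ B) → ∀ x,
      marginOut (G.V \ B) p x = ∏ D ∈ Ds, marginOut (D \ B) (r D) x := by
  classical
  have hDsub : ∀ D ∈ Ds, D ⊆ G.V := fun D hD => ((hDs D).mpr hD).2.1.1
  have hbase : ∀ (B : Set α), G.V \ B = ∅ → ∀ x,
      marginOut (G.V \ B) p x = ∏ D ∈ Ds, marginOut (D \ B) (r D) x := by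
    intro B hVB x
    have hVsub : G.V ⊆ B := Set.diff_eq_empty.mp hVB
    rw [hVB, marginOut_empty, hfact x]
    refine Finset.prod_congr rfl fun D hD => ?_
    have hD0 : D \ B = ∅ := Set.diff_eq_empty.mpr ((hDsub D hD).trans hVsub)
    rw [hD0, marginOut_empty]
  intro n
  induction n with
  | zero =>
    intro B hcard hB1 hB2 x
    exact hbase B ((Set.ncard_eq_zero (Set.toFinite _)).mp
      (Nat.le_zero.mp hcard)) x
  | succ n ih =>
    intro B hcard hB1 hB2 x
    rcases Set.eq_empty_or_nonempty (G.V \ B) with hVB | hVne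
    · exact hbase B hVB x
    · have hfin : (G.V \ B).Finite := Set.toFinite _
      have hfne : hfin.toFinset.Nonempty := by
        rwa [Set.Finite.toFinset_nonempty]
      set v := hfin.toFinset.min' hfne with hvdef
      have hvmem : v ∈ G.V \ B := by
        have := hfin.toFinset.min'_mem hfne
        rwa [Set.Finite.mem_toFinset] at this
      have hvmin : ∀ u ∈ G.V \ B, v ≤ u := fun u hu =>
        hfin.toFinset.min'_le u ((Set.Finite.mem_toFinset hfin).mpr hu)
      set B' : Set α := insert v B with hB'
      have hB'1 : B' ⊆ G.V := Set.insert_subset hvmem.1 hB1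
      have hB'2 : ∀ u ∈ B', ∀ w ∈ G.V, w < u → w ∈ B' := by
        intro u hu w hw hlt
        rcases Set.mem_insert_iff.mp hu with rfl | hu'
        · by_contra hwB'
          have hwB : w ∉ B := fun h => hwB' (Set.mem_insert_of_mem v h)
          exact absurd (hvmin w ⟨hw, hwB⟩) (not_le.mpr hlt)
        · exact Set.mem_insert_of_mem v (hB2 u hu' w hw hlt)
      have hsplit : G.V \ B = insert v (G.V \ B') := by
        ext u
        simp only [Set.mem_diff, Set.mem_insert_iff, hB']
        constructor
        · rintro ⟨hu, hB⟩
          by_cases huv : u = v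
          · exact Or.inl huv
          · exact Or.inr ⟨hu, fun h => h.elim huv hB⟩
        · rintro (rfl | ⟨hu, hB⟩)
          · exact hvmem
          · exact ⟨hu, fun h => hB (Or.inr h)⟩
      have hvnot : v ∉ G.V \ B' := fun h => h.2 (Set.mem_insert v B)
      have hcard' : (G.V \ B').ncard ≤ n := by
        have h1 : G.V \ B' = (G.V \ B) \ {v} := by
          ext u
          simp only [Set.mem_diff, hB', Set.mem_insert_iff,
            Set.mem_singleton_iff]
          tauto
        rw [h1]
        have := Set.ncard_diff_singleton_lt_of_mem hvmem hfin
        omega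
      obtain ⟨D₀, hD₀dist, hvD₀⟩ := exists_district G hvmem.1
      have hD₀ : D₀ ∈ Ds := (hDs D₀).mp hD₀dist
      rw [hsplit]
      rw [marginOut_insert hvnot x]
      rw [ih B' hcard' hB'1 hB'2 (Function.update x v true)]
      rw [ih B' hcard' hB'1 hB'2 (Function.update x v false)]
      have herase : ∀ (b : Bool), ∀ D ∈ Ds.erase D₀,
          marginOut (D \ B') (r D) (Function.update x v b) =
            marginOut (D \ B) (r D) x := by
        intro b D hD
        have hDmem := Finset.mem_of_mem_erase hD
        have hDne : D ≠ D₀ := Finset.ne_of_mem_erase hD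
        have hvD : v ∉ D := fun h =>
          hDne (district_unique G ((hDs D).mpr hDmem) hD₀dist h hvD₀)
        have hset : D \ B' = D \ B := by
          ext u
          simp only [Set.mem_diff, hB', Set.mem_insert_iff]
          constructor
          · rintro ⟨hu, h2⟩
            exact ⟨hu, fun hB => h2 (Or.inr hB)⟩
          · rintro ⟨hu, h2⟩
            refine ⟨hu, ?_⟩
            rintro (rfl | hBm)
            · exact hvD hu
            · exact h2 hBm
        rw [hset]
        refine margin_nodep G htop (hDsub D hDmem) (r D) (hker D hDmem)
          (hrf D hDmem) hB1 hB2 fun u hu => ?_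
        have huv : u ≠ v := by
          rintro rfl
          rcases hu with ⟨-, hB⟩ | hu
          · exact hvmem.2 hB
          · obtain ⟨d, ⟨-, hdB⟩, hdir⟩ := hu
            exact hvmem.2 (hB2 d hdB v hvmem.1 (htop (v, d) hdir hvmem.1))
        rw [Function.update_of_ne huv]
      have hPt := Finset.prod_congr rfl (herase true)
      have hPf := Finset.prod_congr rfl (herase false)
      rw [← Finset.mul_prod_erase Ds
          (fun D => marginOut (D \ B') (r D) (Function.update x v true)) hD₀,
        ← Finset.mul_prod_erase Ds
          (fun D => marginOut (D \ B') (r D) (Function.update x v false)) hD₀,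
        ← Finset.mul_prod_erase Ds
          (fun D => marginOut (D \ B) (r D) x) hD₀]
      rw [hPt, hPf, ← add_mul]
      congr 1
      have hins : D₀ \ B = insert v (D₀ \ B') := by
        ext u
        simp only [Set.mem_diff, Set.mem_insert_iff, hB']
        constructor
        · rintro ⟨hu, hB⟩
          by_cases huv : u = v
          · exact Or.inl huv
          · exact Or.inr ⟨hu, fun h => h.elim huv hB⟩
        · rintro (rfl | ⟨hu, hB⟩)
          · exact ⟨hvD₀, hvmem.2⟩
          · exact ⟨hu, fun h => hB (Or.inr h)⟩
      have hvnotD₀ : v ∉ D₀ \ B' := fun h => h.2 (Set.mem_insert v B)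
      rw [hins, marginOut_insert hvnotD₀ x]

end GFormulaAux

open CADMG


/-- **Proposition 1 (the g-formula).**  Let `G` be a CADMG whose districts are
exactly the members of `Ds`, let `<` be a topological ordering of the random
vertices (every random vertex precedes its children), and suppose the kernel
`p = p_{V|W}` factorizes as `p = ∏_{D ∈ Ds} r_D`, where each `r_D` is a kernel
for `D` given `pa_G(D) \ D` that recursively factorizes according to `G[D]`.
Then there are suitably chosen versions `f v` of the conditional distributions
of `X_v` given `X_{pre_<(v)}, X_W` such that each factor satisfies
`r_D(x_D | x_{pa(D)\D}) = ∏_{v ∈ D} f v (x)`. -/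
theorem g_formula {α : Type} [Fintype α] [LinearOrder α] (G : CADMG α)
    (htop : ∀ e ∈ G.dir, e.1 ∈ G.V → e.1 < e.2)
    (p : (α → Bool) → ℝ) (hp : CADMG.IsKernel G.V G.W p)
    (Ds : Finset (Set α)) (hDs : ∀ D, G.IsDistrict D ↔ D ∈ Ds)
    (r : Set α → (α → Bool) → ℝ)
    (hker : ∀ D ∈ Ds, CADMG.IsKernel D (G.paSet D \ D) (r D))
    (hrf : ∀ D ∈ Ds, CADMG.RF (G.induce D) (r D))
    (hfact : ∀ x, p x = ∏ D ∈ Ds, r D x) :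
    ∃ f : α → (α → Bool) → ℝ,
      (∀ v ∈ G.V,
        CADMG.IsCondVersion G.V G.W {v} {u | u ∈ G.V ∧ u < v} p (f v)) ∧
      ∀ D ∈ Ds, ∀ x : α → Bool, r D x = ∏ᶠ v ∈ D, f v x := by
  classical
  have hDsub : ∀ D ∈ Ds, D ⊆ G.V := fun D hD => ((hDs D).mpr hD).2.1.1
  have hrnn : ∀ D ∈ Ds, ∀ g, 0 ≤ r D g := fun D hD g => ((hker D hD).1 g).1
  have hone : ∀ D ∈ Ds, ∀ z : α → Bool, CADMG.marginOut D (r D) z = 1 :=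
    fun D hD z => (hker D hD).2.2 z
  choose Dv hDvdist hDvmem using fun v (hv : v ∈ G.V) => exists_district G hv
  set f : α → (α → Bool) → ℝ := fun v x =>
    if hv : v ∈ G.V then condK (Dv v hv) (r (Dv v hv)) v x else 0 with hf
  have hfapp : ∀ w (hw : w ∈ G.V) (z : α → Bool),
      f w z = condK (Dv w hw) (r (Dv w hw)) w z := by
    intro w hw z
    rw [hf]
    exact dif_pos hw
  refine ⟨f, ?_, ?_⟩
  · -- IsCondVersion
    intro v hv
    set D₀ : Set α := Dv v hv with hD₀def
    have hd : G.IsDistrict D₀ := hDvdist v hv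
    have hv0 : v ∈ D₀ := hDvmem v hv
    have hD₀ : D₀ ∈ Ds := (hDs D₀).mp hd
    have hsub₀ : D₀ ⊆ G.V := hDsub D₀ hD₀
    set B : Set α := {u | u ∈ G.V ∧ u < v} with hB
    set B' : Set α := {u | u ∈ G.V ∧ u ≤ v} with hB'
    have hBsub : B ⊆ G.V := fun u hu => hu.1
    have hB'sub : B' ⊆ G.V := fun u hu => hu.1
    have hBdown : ∀ u ∈ B, ∀ w ∈ G.V, w < u → w ∈ B :=
      fun u hu w hw hlt => ⟨hw, lt_trans hlt hu.2⟩
    have hB'down : ∀ u ∈ B', ∀ w ∈ G.V, w < u → w ∈ B' :=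
      fun u hu w hw hlt => ⟨hw, le_of_lt (lt_of_lt_of_le hlt hu.2)⟩
    have hc : ∀ z : α → Bool, f v z = condK D₀ (r D₀) v z := fun z => hfapp v hv z
    have hdenset : {u | u ∈ D₀ ∧ v ≤ u} = D₀ \ B := by
      ext u
      simp only [Set.mem_setOf_eq, Set.mem_diff, hB]
      constructor
      · rintro ⟨hu, hle⟩
        exact ⟨hu, fun h => absurd hle (not_le.mpr h.2)⟩
      · rintro ⟨hu, h⟩
        refine ⟨hu, ?_⟩
        by_contra hle
        push_neg at hle
        exact h ⟨hsub₀ hu, hle⟩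
    have hnumset : {u | u ∈ D₀ ∧ v < u} = D₀ \ B' := by
      ext u
      simp only [Set.mem_setOf_eq, Set.mem_diff, hB']
      constructor
      · rintro ⟨hu, hlt⟩
        exact ⟨hu, fun h => absurd hlt (not_lt.mpr h.2)⟩
      · rintro ⟨hu, h⟩
        refine ⟨hu, ?_⟩
        by_contra hle
        push_neg at hle
        exact h ⟨hsub₀ hu, hle⟩
    have hnumsub : {u | u ∈ D₀ ∧ v < u} ⊆ {u | u ∈ D₀ ∧ v ≤ u} :=
      fun u hu => ⟨hu.1, le_of_lt hu.2⟩
    have hdennn := fun z => marginOut_nonneg (hrnn D₀ hD₀) {u | u ∈ D₀ ∧ v ≤ u} z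
    have hnumnn := fun z => marginOut_nonneg (hrnn D₀ hD₀) {u | u ∈ D₀ ∧ v < u} z
    have hmono := fun z => marginOut_mono (hrnn D₀ hD₀) hnumsub z
    -- no-dependence of den and num
    have hdeneq : ∀ z w : α → Bool, (∀ u ∈ ({v} : Set α) ∪ (B ∪ G.W), z u = w u) →
        marginOut {u | u ∈ D₀ ∧ v ≤ u} (r D₀) z =
          marginOut {u | u ∈ D₀ ∧ v ≤ u} (r D₀) w := by
      intro z w hzw
      rw [hdenset]
      refine margin_nodep G htop hsub₀ (r D₀) (hker D₀ hD₀) (hrf D₀ hD₀)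
        hBsub hBdown fun u hu => ?_
      rcases hu with ⟨-, huB⟩ | hu
      · exact hzw u (Or.inr (Or.inl huB))
      · obtain ⟨d, ⟨-, hdB⟩, hdir⟩ := hu
        rcases (G.dir_mem (u, d) hdir).1 with huV | huW
        · exact hzw u (Or.inr (Or.inl ⟨huV, lt_trans (htop (u, d) hdir huV) hdB.2⟩))
        · exact hzw u (Or.inr (Or.inr huW))
    have hnumeq : ∀ z w : α → Bool, (∀ u ∈ ({v} : Set α) ∪ (B ∪ G.W), z u = w u) →
        marginOut {u | u ∈ D₀ ∧ v < u} (r D₀) z =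
          marginOut {u | u ∈ D₀ ∧ v < u} (r D₀) w := by
      intro z w hzw
      rw [hnumset]
      refine margin_nodep G htop hsub₀ (r D₀) (hker D₀ hD₀) (hrf D₀ hD₀)
        hB'sub hB'down fun u hu => ?_
      rcases hu with ⟨-, huB'⟩ | hu
      · rcases lt_or_eq_of_le huB'.2 with h | h
        · exact hzw u (Or.inr (Or.inl ⟨huB'.1, h⟩))
        · exact hzw u (Or.inl (Set.mem_singleton_iff.mpr h))
      · obtain ⟨d, ⟨-, hdB'⟩, hdir⟩ := hu
        rcases (G.dir_mem (u, d) hdir).1 with huV | huW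
        · exact hzw u (Or.inr (Or.inl
            ⟨huV, lt_of_lt_of_le (htop (u, d) hdir huV) hdB'.2⟩))
        · exact hzw u (Or.inr (Or.inr huW))
    have hupd : ∀ (b : Bool) (z : α → Bool), ∀ u ∈ ({v} : Set α) ∪ (B ∪ G.W),
        u ≠ v → Function.update z v b u = z u :=
      fun b z u _ huv => Function.update_of_ne huv b z
    have hupdok : ∀ (b : Bool) (z : α → Bool),
        marginOut {u | u ∈ D₀ ∧ v ≤ u} (r D₀) (Function.update z v b) =
          marginOut {u | u ∈ D₀ ∧ v ≤ u} (r D₀) z := by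
      intro b z
      rw [hdenset]
      refine margin_nodep G htop hsub₀ (r D₀) (hker D₀ hD₀) (hrf D₀ hD₀)
        hBsub hBdown fun u hu => ?_
      have huv : u ≠ v := by
        rcases hu with ⟨-, huB⟩ | hu
        · exact ne_of_lt huB.2
        · obtain ⟨d, ⟨-, hdB⟩, hdir⟩ := hu
          rcases (G.dir_mem (u, d) hdir).1 with huV | huW
          · exact ne_of_lt (lt_trans (htop (u, d) hdir huV) hdB.2)
          · rintro rfl
            exact (Set.disjoint_left.mp G.disjointVW hv) huW
      exact Function.update_of_ne huv b z
    refine ⟨⟨fun x => ?_, fun x y hxy => ?_, fun x => ?_⟩, fun x => ?_⟩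
    · -- bounds
      rw [hc x]
      unfold condK
      by_cases h0 : marginOut {u | u ∈ D₀ ∧ v ≤ u} (r D₀) x = 0
      · rw [if_pos h0]; norm_num
      · rw [if_neg h0]
        have hpos : 0 < marginOut {u | u ∈ D₀ ∧ v ≤ u} (r D₀) x :=
          lt_of_le_of_ne (hdennn x) (Ne.symm h0)
        exact ⟨div_nonneg (hnumnn x) (hdennn x), (div_le_one hpos).mpr (hmono x)⟩
    · -- dependence
      rw [hc x, hc y]
      unfold condK
      rw [hdeneq x y hxy, hnumeq x y hxy]
    · -- sums to one
      show CADMG.marginOut ({v} : Set α) (f v) x = 1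
      have hsing : ({v} : Set α) = insert v (∅ : Set α) := by simp
      rw [hsing, marginOut_insert (Set.notMem_empty v) x, marginOut_empty,
        marginOut_empty, hc _, hc _]
      unfold condK
      rw [hupdok true x, hupdok false x]
      by_cases h0 : marginOut {u | u ∈ D₀ ∧ v ≤ u} (r D₀) x = 0
      · rw [if_pos h0, if_pos h0]; norm_num
      · rw [if_neg h0, if_neg h0]
        have hins2 : {u | u ∈ D₀ ∧ v ≤ u} = insert v {u | u ∈ D₀ ∧ v < u} := by
          ext u
          simp only [Set.mem_setOf_eq, Set.mem_insert_iff]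
          constructor
          · rintro ⟨hu, hle⟩
            rcases eq_or_lt_of_le hle with h | h
            · exact Or.inl h.symm
            · exact Or.inr ⟨hu, h⟩
          · rintro (heq | ⟨hu, hlt⟩)
            · rw [heq]; exact ⟨hv0, le_refl v⟩
            · exact ⟨hu, le_of_lt hlt⟩
        have hvnotnum : v ∉ {u | u ∈ D₀ ∧ v < u} := fun h => lt_irrefl v h.2
        have hsplit2 : marginOut {u | u ∈ D₀ ∧ v ≤ u} (r D₀) x =
            marginOut {u | u ∈ D₀ ∧ v < u} (r D₀) (Function.update x v true) +
              marginOut {u | u ∈ D₀ ∧ v < u} (r D₀) (Function.update x v false) := by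
          rw [hins2]
          exact marginOut_insert hvnotnum x
        rw [← add_div, ← hsplit2, div_self h0]
    · -- version identity
      have hBfact := gfactorization G htop p Ds hDs r hker hrf hfact
        (G.V \ B).ncard B le_rfl hBsub hBdown x
      have hB'fact := gfactorization G htop p Ds hDs r hker hrf hfact
        (G.V \ B').ncard B' le_rfl hB'sub hB'down x
      have hsetB' : G.V \ (({v} : Set α) ∪ B) = G.V \ B' := by
        ext u
        simp only [Set.mem_diff, Set.mem_union, Set.mem_singleton_iff, hB, hB',
          Set.mem_setOf_eq]
        constructor
        · rintro ⟨hu, h2⟩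
          refine ⟨hu, fun h => ?_⟩
          rcases lt_or_eq_of_le h.2 with h3 | h3
          · exact h2 (Or.inr ⟨hu, h3⟩)
          · exact h2 (Or.inl h3)
        · rintro ⟨hu, h2⟩
          refine ⟨hu, ?_⟩
          rintro (rfl | h3)
          · exact h2 ⟨hu, le_refl u⟩
          · exact h2 ⟨hu, le_of_lt h3.2⟩
      rw [hBfact, hsetB', hB'fact,
        ← Finset.mul_prod_erase Ds (fun D => marginOut (D \ B) (r D) x) hD₀,
        ← Finset.mul_prod_erase Ds (fun D => marginOut (D \ B') (r D) x) hD₀]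
      have herase2 : ∀ D ∈ Ds.erase D₀,
          marginOut (D \ B') (r D) x = marginOut (D \ B) (r D) x := by
        intro D hD
        have hDmem := Finset.mem_of_mem_erase hD
        have hDne : D ≠ D₀ := Finset.ne_of_mem_erase hD
        have hvD : v ∉ D := fun h =>
          hDne (district_unique G ((hDs D).mpr hDmem) hd h hv0)
        have hset : D \ B' = D \ B := by
          ext u
          simp only [Set.mem_diff, hB, hB', Set.mem_setOf_eq]
          constructor
          · rintro ⟨hu, h2⟩
            exact ⟨hu, fun h => h2 ⟨h.1, le_of_lt h.2⟩⟩
          · rintro ⟨hu, h2⟩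
            refine ⟨hu, fun h => ?_⟩
            rcases lt_or_eq_of_le h.2 with h3 | h3
            · exact h2 ⟨h.1, h3⟩
            · exact hvD (h3 ▸ hu)
        rw [hset]
      rw [Finset.prod_congr rfl herase2, hc x]
      unfold condK
      rw [← hdenset, ← hnumset]
      by_cases h0 : marginOut {u | u ∈ D₀ ∧ v ≤ u} (r D₀) x = 0
      · rw [if_pos h0, h0]
        have hnum0 : marginOut {u | u ∈ D₀ ∧ v < u} (r D₀) x = 0 :=
          le_antisymm (h0 ▸ hmono x) (hnumnn x)
        rw [hnum0]
        ring
      · rw [if_neg h0]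
        field_simp
  · -- the product formula
    intro D hD x
    have hsub := hDsub D hD
    have hDfin : D.Finite := Set.toFinite D
    have hcoe : D = ↑hDfin.toFinset := (Set.Finite.coe_toFinset hDfin).symm
    have h1 : ∏ᶠ w ∈ D, f w x = ∏ w ∈ hDfin.toFinset, f w x := by
      conv_lhs => rw [hcoe]
      rw [finprod_mem_coe_finset]
    rw [h1]
    have h2 : ∏ w ∈ hDfin.toFinset, f w x =
        ∏ w ∈ hDfin.toFinset, condK D (r D) w x := by
      refine Finset.prod_congr rfl fun w hw => ?_
      rw [Set.Finite.mem_toFinset] at hw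
      have hwV : w ∈ G.V := hsub hw
      have hDeq : Dv w hwV = D :=
        district_unique G (hDvdist w hwV) ((hDs D).mpr hD) (hDvmem w hwV) hw
      rw [hfapp w hwV x, hDeq]
    rw [h2, telescope D (r D) (hrnn D hD) (hone D hD) hDfin.toFinset.card
      hDfin.toFinset le_rfl (by rw [Set.Finite.coe_toFinset])
      (fun u hu e _ _ => (Set.Finite.mem_toFinset hDfin).mpr hu) x]
    rw [show D \ ↑hDfin.toFinset = ∅ from by
      rw [Set.Finite.coe_toFinset]; exact Set.diff_self, marginOut_empty]
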